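/- arXiv:1909.10177 — 3 statements merged into one kernel-verified Lean document; each statement's English description precedes it below -/
import Mathlib

section
/- Let c and c' be two binary strings of length m, each starting and ending with 1 and containing only 1-runs and 2-runs. If s is a longest common subsequence of c and c', then there exists a string s_sub that starts and ends with 1, contains only 1-runs and 2-runs, has |s_sub| = |s|, and is a common subsequence of both c and c'. -/
/-- `s` starts and ends with the symbol `1` (`true`) and all its maximal runs
have length 1 or 2. -/
def InS (s : List Bool) : Prop :=
  s.head? = some true ∧ s.getLast? = some true ∧
    ∀ r ∈ s.splitBy (· == ·), r.length = 1 ∨ r.length = 2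

/-- The number of runs of a binary string. -/
def runsCount (s : List Bool) : ℕ := (s.splitBy (· == ·)).length

/-- The number of runs of length 1 of a binary string. -/
def oneRuns (s : List Bool) : ℕ :=
  ((s.splitBy (· == ·)).filter (fun r => r.length == 1)).length

/-- The number of runs of length 2 of a binary string. -/
def twoRuns (s : List Bool) : ℕ :=
  ((s.splitBy (· == ·)).filter (fun r => r.length == 2)).length

open List

/-- No three consecutive equal symbols. -/
def No3 : List Bool → Prop
  | x :: y :: z :: t => ¬(x = y ∧ y = z) ∧ No3 (y :: z :: t)
  | _ => True

lemma no3_short : ∀ (l : List Bool), (∀ (x y z : Bool) (t : List Bool), l = x :: y :: z :: t → False) → No3 l := by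
  intro l h
  match l with
  | [] => trivial
  | [_] => trivial
  | [_, _] => trivial
  | x :: y :: z :: t => exact (h x y z t rfl).elim

lemma no3_tail {x : Bool} {l : List Bool} (h : No3 (x :: l)) : No3 l := by
  match l with
  | [] => trivial
  | [y] => trivial
  | y :: z :: t => exact h.2

lemma no3_suffix : ∀ (p l : List Bool), No3 (p ++ l) → No3 l := by
  intro p
  induction p with
  | nil => exact fun l h => h
  | cons x p ih => exact fun l h => ih l (no3_tail h)

lemma no3_prefix : ∀ (l q : List Bool), No3 (l ++ q) → No3 l := by
  intro l
  induction l using No3.induct with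
  | case1 x y z t ih =>
    intro q h
    exact ⟨h.1, ih q h.2⟩
  | case2 l h =>
    intro q _
    exact no3_short l h

lemma no3_infix {l t : List Bool} (h : No3 t) (hi : l <:+: t) : No3 l := by
  obtain ⟨p, q, rfl⟩ := hi
  exact no3_prefix _ _ (no3_suffix p _ (by rw [append_assoc] at h; exact h))

lemma not_no3_decomp : ∀ (s : List Bool), ¬ No3 s → ∃ u a v, s = u ++ a :: a :: a :: v := by
  intro s
  induction s using No3.induct with
  | case1 x y z t ih =>
    intro h
    by_cases hxy : x = y ∧ y = z
    · refine ⟨[], x, t, ?_⟩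
      obtain ⟨h1, h2⟩ := hxy; subst h1; subst h2; rfl
    · have : ¬ No3 (y :: z :: t) := fun h2 => h ⟨hxy, h2⟩
      obtain ⟨u, a, v, huv⟩ := ih this
      exact ⟨x :: u, a, v, by simp [huv]⟩
  | case2 l h =>
    intro hn
    exact absurd (no3_short l h) hn

lemma sublist_of_cons_cons_ne {a b : Bool} {l r : List Bool} (hne : a ≠ b)
    (h : (a :: l) <+ (b :: r)) : (a :: l) <+ r := by
  cases h with
  | cons _ h => exact h
  | cons_cons => exact absurd rfl hne

lemma flip_sub_aux : ∀ (a : Bool) (v c' : List Bool), (a :: a :: v) <+ c' → No3 (a :: c') →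
    ((!a) :: a :: v) <+ c' := by
  intro a v c' h h3
  match c' with
  | [] => exact absurd (sublist_nil.mp h) (by simp)
  | b :: c'' =>
    by_cases hb : b = a
    · have hav : (a :: v) <+ c'' := by
        rw [hb] at h
        cases h with
        | cons _ h => exact Sublist.trans (by simp) h
        | cons_cons _ h => exact h
      match c'', hav with
      | d :: c''', hav =>
        have hd : d ≠ a := fun hda => h3.1 ⟨hb.symm, hb.trans hda.symm⟩
        have hd' : d = !a := by cases d <;> cases a <;> simp_all
        have hav' : (a :: v) <+ c''' := sublist_of_cons_cons_ne (by rw [hd']; simp) hav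
        rw [hd']
        exact Sublist.cons _ (Sublist.cons₂ _ hav')
    · have hb' : b = !a := by cases b <;> cases a <;> simp_all
      have h2 : (a :: a :: v) <+ c'' := sublist_of_cons_cons_ne (Ne.symm hb) h
      rw [hb']
      exact Sublist.cons₂ _ (Sublist.trans (by simp) h2)

lemma flip_sub : ∀ (c : List Bool), No3 c → ∀ (a : Bool) (v : List Bool),
    (a :: a :: a :: v) <+ c → (a :: (!a) :: a :: v) <+ c := by
  intro c
  induction c with
  | nil => intro _ a v h; exact absurd (sublist_nil.mp h) (by simp)
  | cons b c' ih =>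
    intro h3 a v h
    by_cases hb : b = a
    · rw [hb] at h h3 ⊢
      cases h with
      | cons _ h => exact Sublist.cons _ (ih (no3_tail h3) a v h)
      | cons_cons _ h => exact Sublist.cons₂ _ (flip_sub_aux a v c' h h3)
    · have h2 : (a :: a :: a :: v) <+ c' := sublist_of_cons_cons_ne (Ne.symm hb) h
      exact Sublist.cons _ (ih (no3_tail h3) a v h2)

/-- measure: number of adjacent equal pairs -/
def mu : List Bool → ℕ
  | x :: y :: t => (if x = y then 1 else 0) + mu (y :: t)
  | _ => 0

lemma mu_flip (a : Bool) : ∀ (u v : List Bool),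
    mu (u ++ a :: a :: a :: v) = mu (u ++ a :: (!a) :: a :: v) + 2 := by
  intro u v
  induction u with
  | nil => cases a <;> simp [mu] <;> omega
  | cons x u ih =>
    cases u with
    | nil => cases a <;> cases x <;> simp_all [mu] <;> omega
    | cons y u => simp only [cons_append, mu, List.append_eq] at ih ⊢; omega

lemma head?_flip (a : Bool) (u v : List Bool) :
    (u ++ a :: (!a) :: a :: v).head? = (u ++ a :: a :: a :: v).head? := by
  cases u <;> simp

lemma getLast?_flip (a : Bool) (u v : List Bool) :
    (u ++ a :: (!a) :: a :: v).getLast? = (u ++ a :: a :: a :: v).getLast? := by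
  simp [getLast?_append, getLast?_cons_cons]

lemma reduce (c c' : List Bool) (h3c : No3 c) (h3c' : No3 c') :
    ∀ (n : ℕ) (s : List Bool), mu s ≤ n → s <+ c → s <+ c' →
    ∃ t, No3 t ∧ t.length = s.length ∧ t.head? = s.head? ∧ t.getLast? = s.getLast? ∧
      t <+ c ∧ t <+ c' := by
  intro n
  induction n with
  | zero =>
    intro s hmu hc hc'
    by_cases h : No3 s
    · exact ⟨s, h, rfl, rfl, rfl, hc, hc'⟩
    · obtain ⟨u, a, v, rfl⟩ := not_no3_decomp s h
      rw [mu_flip] at hmu; omega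
  | succ n ih =>
    intro s hmu hc hc'
    by_cases h : No3 s
    · exact ⟨s, h, rfl, rfl, rfl, hc, hc'⟩
    · obtain ⟨u, a, v, rfl⟩ := not_no3_decomp s h
      have hmu' : mu (u ++ a :: (!a) :: a :: v) ≤ n := by
        rw [mu_flip] at hmu; omega
      have key : ∀ d : List Bool, No3 d → (u ++ a :: a :: a :: v) <+ d →
          (u ++ a :: (!a) :: a :: v) <+ d := by
        intro d h3d hd
        rw [append_sublist_iff] at hd ⊢
        obtain ⟨r1, r2, hsplit, h1, h2⟩ := hd
        exact ⟨r1, r2, hsplit, h1,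
          flip_sub r2 (no3_infix h3d ⟨r1, [], by simp [hsplit]⟩) a v h2⟩
      obtain ⟨t, ht3, hlen, hhd, hlast, htc, htc'⟩ :=
        ih (u ++ a :: (!a) :: a :: v) hmu' (key c h3c hc) (key c' h3c' hc')
      exact ⟨t, ht3, by simpa [hlen] using rfl, hhd.trans (head?_flip a u v),
        hlast.trans (getLast?_flip a u v), htc, htc'⟩

lemma no3_append_one {a : Bool} {T : List Bool} (hT : No3 T)
    (hh : ∀ b, T.head? = some b → a ≠ b) : No3 (a :: T) := by
  match T with
  | [] => trivial
  | [t0] => trivial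
  | t0 :: t1 :: T' => exact ⟨fun h => hh t0 rfl h.1, hT⟩

lemma no3_append_two {a : Bool} {T : List Bool} (hT : No3 T)
    (hh : ∀ b, T.head? = some b → a ≠ b) : No3 (a :: a :: T) := by
  match T with
  | [] => trivial
  | t0 :: T' => exact ⟨fun h => hh t0 rfl h.2, no3_append_one hT hh⟩

lemma no3_flatten : ∀ (L : List (List Bool)),
    (∀ r ∈ L, r ≠ []) → (∀ r ∈ L, Chain' (fun x y => (x == y) = true) r) →
    (∀ r ∈ L, r.length ≤ 2) →
    Chain' (fun A B => ∃ (ha : A ≠ []) (hb : B ≠ []), (A.getLast ha == B.head hb) = false) L →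
    No3 L.flatten := by
  intro L
  induction L with
  | nil => intro _ _ _ _; trivial
  | cons R L ih =>
    intro hne hch hlen hCh
    simp only [Chain', isChain_cons] at hCh
    have hT : No3 L.flatten := ih (fun r hr => hne r (mem_cons_of_mem _ hr))
      (fun r hr => hch r (mem_cons_of_mem _ hr)) (fun r hr => hlen r (mem_cons_of_mem _ hr)) hCh.2
    have hRne := hne R (mem_cons_self)
    have hRlen := hlen R (mem_cons_self)
    have hRch := hch R (mem_cons_self)
    have hh : ∀ b, L.flatten.head? = some b → R.getLast hRne ≠ b := by
      intro b hb hab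
      match L, hb with
      | R2 :: L', hb =>
        have hR2ne : R2 ≠ [] := hne R2 (by simp)
        obtain ⟨h2, t2, rfl⟩ := exists_cons_of_ne_nil hR2ne
        have hb' : b = h2 := by simpa using hb.symm
        obtain ⟨ha', hb'', hfalse⟩ := hCh.1 (h2 :: t2) rfl
        rw [head_cons] at hfalse
        simp only [beq_eq_false_iff_ne, ne_eq] at hfalse
        exact hfalse (hab.trans hb')
    match R, hRne, hRlen, hRch with
    | [a], _, _, _ =>
      simpa using no3_append_one hT (by simpa using hh)
    | [a, b], _, _, hRch =>
      have hab : a = b := by simpa using rel_of_chain_cons hRch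
      subst hab
      simpa using no3_append_two hT (by simpa using hh)

lemma runs_le_two_of_no3 {t : List Bool} (h : No3 t) :
    ∀ r ∈ t.splitBy (· == ·), r.length ≤ 2 := by
  intro r hr
  by_contra hlen
  push_neg at hlen
  match r, hlen with
  | x :: y :: z :: w, _ =>
    have hch : Chain' (fun x y => (x == y) = true) (x :: y :: z :: w) := isChain_of_mem_splitBy hr
    have hxy : x = y := by simpa using rel_of_chain_cons hch
    have hyz : y = z := by simpa using rel_of_chain_cons (isChain_cons_cons.mp hch).2
    have hinf : (x :: y :: z :: w) <:+: t := by
      have := infix_of_mem_flatten hr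
      rwa [flatten_splitBy] at this
    exact (no3_infix h hinf).1 ⟨hxy, hyz⟩

lemma no3_of_InS {c : List Bool} (hc : InS c) : No3 c := by
  have := no3_flatten (c.splitBy (· == ·))
    (fun r hr => ne_nil_of_mem_splitBy hr)
    (fun r hr => isChain_of_mem_splitBy hr)
    (fun r hr => by rcases hc.2.2 r hr with h | h <;> omega)
    (isChain_getLast_head_splitBy _ c)
  rwa [flatten_splitBy] at this

lemma cons_true_sublist {s c : List Bool} (hs : s <+ c) (hch : c.head? = some true)
    (hsh : s.head? = some false) : (true :: s) <+ c := by
  match c, s with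
  | tc :: ct, b :: st =>
    have h1 : tc = true := by simpa using hch
    have h2 : b = false := by simpa using hsh
    subst h1; subst h2
    exact Sublist.cons₂ _ (sublist_of_cons_cons_ne (by simp) hs)

/-- If `c, c'` are length-`m` strings in `S` (start and end with `1`, only 1-runs and
2-runs) and `s` is a longest common subsequence of `c` and `c'`, then there is a common
subsequence `s_sub ∈ S` of `c` and `c'` with `|s_sub| = |s|`. -/
theorem lcs_can_be_taken_in_S (m : ℕ) (c c' : List Bool)
    (hcl : c.length = m) (hc : InS c) (hc'l : c'.length = m) (hc' : InS c')
    (s : List Bool) (hsc : List.Sublist s c) (hsc' : List.Sublist s c')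
    (hmax : ∀ u : List Bool, List.Sublist u c → List.Sublist u c' → u.length ≤ s.length) :
    ∃ ssub : List Bool, InS ssub ∧ ssub.length = s.length ∧
      List.Sublist ssub c ∧ List.Sublist ssub c' := by
  have h3c := no3_of_InS hc
  have h3c' := no3_of_InS hc'
  have htruec : true ∈ c := by have := hc.1; cases c <;> simp_all
  have htruec' : true ∈ c' := by have := hc'.1; cases c' <;> simp_all
  have hs1 : 1 ≤ s.length := by
    simpa using hmax [true] (singleton_sublist.mpr htruec) (singleton_sublist.mpr htruec')
  have hsne : s ≠ [] := by intro h; subst h; simp at hs1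
  have hshead : s.head? = some true := by
    by_contra hb
    have hsf : s.head? = some false := by
      obtain ⟨b, st, rfl⟩ := exists_cons_of_ne_nil hsne
      cases b
      · rfl
      · exact absurd rfl hb
    have h1 := cons_true_sublist hsc hc.1 hsf
    have h2 := cons_true_sublist hsc' hc'.1 hsf
    have := hmax _ h1 h2
    simp at this
  have hslast : s.getLast? = some true := by
    by_contra hb
    have hsf : s.getLast? = some false := by
      cases hgl : s.getLast? with
      | none => exact absurd (getLast?_eq_none_iff.mp hgl) hsne
      | some b =>
        cases b
        · rfl
        · exact absurd hgl hb
    have h1 := cons_true_sublist hsc.reverse (by rw [head?_reverse]; exact hc.2.1)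
      (by rw [head?_reverse]; exact hsf)
    have h2 := cons_true_sublist hsc'.reverse (by rw [head?_reverse]; exact hc'.2.1)
      (by rw [head?_reverse]; exact hsf)
    have h1' : (s ++ [true]) <+ c := by simpa using h1.reverse
    have h2' : (s ++ [true]) <+ c' := by simpa using h2.reverse
    have := hmax _ h1' h2'
    simp at this
  obtain ⟨t, ht3, hlen, hhd, hlast, htc, htc'⟩ :=
    reduce c c' h3c h3c' (mu s) s le_rfl hsc hsc'
  refine ⟨t, ⟨hhd.trans hshead, hlast.trans hslast, ?_⟩, hlen, htc, htc'⟩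
  intro r hr
  have h2 := runs_le_two_of_no3 ht3 r hr
  have h1 : 1 ≤ r.length := length_pos_iff.mpr (ne_nil_of_mem_splitBy hr)
  omega
end

section
/- Let T ≥ M₁ + q where q ≥ 1-p, p ∈ (0,1), T an integer, and let Z ~ Binomial(⌈M₁/(1-p)⌉, 1-p). Then Pr[Z ≥ T+1] ≤ 1 - e^{-M₁-q} Σ_{i=0}^{T} (M₁+q)^i / i!. Moreover the right-hand side is monotonically increasing in q. -/
open Finset Real
set_option maxHeartbeats 1000000


/-- Poisson partial CDF -/
noncomputable def poisCDF (T : ℕ) (l : ℝ) : ℝ :=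
  Real.exp (-l) * ∑ i ∈ Finset.range (T + 1), l ^ i / (i.factorial : ℝ)

lemma hasDerivAt_poisCDF (T : ℕ) (l : ℝ) :
    HasDerivAt (poisCDF T) (-(Real.exp (-l) * l ^ T / (T.factorial : ℝ))) l := by
  have hs : HasDerivAt (fun x : ℝ => ∑ i ∈ Finset.range (T + 1), x ^ i / (i.factorial : ℝ))
      (∑ i ∈ Finset.range T, l ^ i / (i.factorial : ℝ)) l := by
    have h : HasDerivAt (fun x : ℝ => ∑ i ∈ Finset.range (T + 1), x ^ i / (i.factorial : ℝ))
        (∑ i ∈ Finset.range (T + 1), (i : ℝ) * l ^ (i - 1) / (i.factorial : ℝ)) l := by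
      have := HasDerivAt.fun_sum (u := Finset.range (T + 1))
        (A := fun i x => x ^ i / (i.factorial : ℝ))
        (A' := fun i => (i : ℝ) * l ^ (i - 1) / (i.factorial : ℝ))
        (fun i _ => (hasDerivAt_pow i l).div_const _)
      exact this
    convert h using 1
    rw [Finset.sum_range_succ' (fun i => (i : ℝ) * l ^ (i - 1) / (i.factorial : ℝ)) T]
    simp only [Nat.cast_zero, zero_mul, Nat.factorial_zero, Nat.cast_one, zero_div, add_zero]
    apply Finset.sum_congr rfl
    intro j _
    have : ((j + 1 : ℕ) : ℝ) * l ^ (j + 1 - 1) / ((j + 1).factorial : ℝ)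
        = l ^ j / (j.factorial : ℝ) := by
      rw [Nat.factorial_succ, Nat.add_sub_cancel]
      push_cast
      field_simp
    rw [this]
  have he : HasDerivAt (fun x : ℝ => Real.exp (-x)) (-Real.exp (-l)) l := by
    have h := (Real.hasDerivAt_exp (-l)).comp l (hasDerivAt_neg l)
    rw [show -Real.exp (-l) = Real.exp (-l) * -1 by ring]
    exact h
  have : HasDerivAt (poisCDF T) _ l := he.mul hs
  convert this using 1
  have hsplit : (∑ i ∈ Finset.range (T + 1), l ^ i / (i.factorial : ℝ))
      = (∑ i ∈ Finset.range T, l ^ i / (i.factorial : ℝ)) + l ^ T / (T.factorial : ℝ) :=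
    Finset.sum_range_succ _ T
  rw [hsplit]; ring

lemma poisCDF_antitoneOn (T : ℕ) : AntitoneOn (poisCDF T) (Set.Ici 0) := by
  apply antitoneOn_of_deriv_nonpos (convex_Ici 0)
  · exact fun x _ => ((hasDerivAt_poisCDF T x).continuousAt).continuousWithinAt
  · intro x _
    exact (hasDerivAt_poisCDF T x).differentiableAt.differentiableWithinAt
  · intro x hx
    rw [interior_Ici] at hx
    rw [(hasDerivAt_poisCDF T x).deriv]
    have hx0 : (0:ℝ) < x := hx
    have : (0:ℝ) ≤ Real.exp (-x) * x ^ T / (T.factorial : ℝ) := by positivity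
    linarith

noncomputable def binCDF (n T : ℕ) (x : ℝ) : ℝ :=
  ∑ k ∈ Finset.range (T + 1), (n.choose k : ℝ) * x ^ k * (1 - x) ^ (n - k)


lemma succ_choose_cast (n k : ℕ) (hn : 1 ≤ n) :
    ((k + 1 : ℕ) : ℝ) * (n.choose (k + 1) : ℝ) = (n : ℝ) * ((n - 1).choose k : ℝ) := by
  have h := Nat.add_one_mul_choose_eq (n - 1) k
  have hn' : n - 1 + 1 = n := Nat.succ_pred_eq_of_pos hn
  rw [hn'] at h
  have : (n : ℝ) * ((n-1).choose k : ℝ) = ((n * (n-1).choose k : ℕ) : ℝ) := by push_cast; ring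
  rw [this, h]; push_cast; ring

lemma sub_choose_cast (n k : ℕ) (hn : 1 ≤ n) :
    ((n - (k+1) : ℕ) : ℝ) * (n.choose (k+1) : ℝ) = (n : ℝ) * ((n - 1).choose (k+1) : ℝ) := by
  have h1 : n.choose (k+1+1) * (k+1+1) = n.choose (k+1) * (n - (k+1)) :=
    Nat.choose_succ_right_eq n (k+1)
  have h2 := Nat.add_one_mul_choose_eq (n - 1) (k + 1)
  have hn' : n - 1 + 1 = n := Nat.succ_pred_eq_of_pos hn
  rw [hn'] at h2
  have key : n.choose (k+1) * (n - (k+1)) = n * ((n-1).choose (k+1)) := by rw [h2, h1]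
  calc ((n - (k+1) : ℕ) : ℝ) * (n.choose (k+1) : ℝ)
      = ((n.choose (k+1) * (n - (k+1)) : ℕ) : ℝ) := by push_cast; ring
    _ = ((n * ((n-1).choose (k+1)) : ℕ) : ℝ) := by rw [key]
    _ = (n : ℝ) * ((n - 1).choose (k+1) : ℝ) := by push_cast; ring

lemma binCDF_hasDerivAt (n T : ℕ) (hT : T < n) (x : ℝ) :
    HasDerivAt (binCDF n T)
      (-(((n * (n-1).choose T : ℕ)) : ℝ) * x ^ T * (1 - x) ^ (n - 1 - T)) x := by
  have hn : 1 ≤ n := Nat.one_le_of_lt (Nat.lt_of_le_of_lt (Nat.zero_le T) hT)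
  have hterm : ∀ k : ℕ, HasDerivAt (fun y : ℝ => (n.choose k : ℝ) * y ^ k * (1 - y) ^ (n - k))
      ((n.choose k : ℝ) * ((k : ℝ) * x ^ (k-1) * (1-x) ^ (n-k)
        - x ^ k * (((n-k : ℕ) : ℝ) * (1-x) ^ (n-k-1)))) x := by
    intro k
    have h1 : HasDerivAt (fun y : ℝ => y ^ k) ((k:ℝ) * x ^ (k-1)) x := hasDerivAt_pow k x
    have hin : HasDerivAt (fun y : ℝ => 1 - y) (-1 : ℝ) x := by
      exact (hasDerivAt_id' x).const_sub (1:ℝ)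
    have h2 : HasDerivAt (fun y : ℝ => (1 - y) ^ (n - k))
        ((((n-k : ℕ):ℝ) * (1-x) ^ (n-k-1)) * (-1)) x :=
      (hasDerivAt_pow (n-k) (1-x)).comp x hin
    have h4 := (h1.mul h2).const_mul (n.choose k : ℝ)
    have h3 : (fun y : ℝ => (n.choose k : ℝ) * (y ^ k * (1 - y) ^ (n - k)))
        = (fun y : ℝ => (n.choose k : ℝ) * y ^ k * (1 - y) ^ (n - k)) := by
      funext y; ring
    replace h4 : HasDerivAt (fun y : ℝ => (n.choose k : ℝ) * (y ^ k * (1 - y) ^ (n - k))) _ x := h4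
    rw [h3] at h4
    convert h4 using 1
    ring
  have hsum := HasDerivAt.fun_sum (u := Finset.range (T+1))
    (A := fun k (y:ℝ) => (n.choose k : ℝ) * y ^ k * (1 - y) ^ (n - k))
    (A' := fun k => (n.choose k : ℝ) * ((k : ℝ) * x ^ (k-1) * (1-x) ^ (n-k)
        - x ^ k * (((n-k : ℕ) : ℝ) * (1-x) ^ (n-k-1))))
    (fun k _ => hterm k)
  set w : ℕ → ℝ := fun k =>
    if k = 0 then 0 else ((n * ((n-1).choose (k-1)) : ℕ) : ℝ) * x ^ (k-1) * (1-x) ^ (n - k)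
    with hw
  have htel : ∀ k ∈ Finset.range (T+1),
      (n.choose k : ℝ) * ((k : ℝ) * x ^ (k-1) * (1-x) ^ (n-k)
        - x ^ k * (((n-k : ℕ) : ℝ) * (1-x) ^ (n-k-1))) = w k - w (k+1) := by
    intro k hk
    have hkT : k ≤ T := Nat.lt_succ_iff.mp (Finset.mem_range.mp hk)
    have hkn : k < n := lt_of_le_of_lt hkT hT
    match k with
    | 0 =>
      simp only [hw, if_pos rfl, if_neg (Nat.succ_ne_zero 0)]
      simp only [Nat.sub_zero, Nat.choose_zero_right, Nat.cast_one, Nat.cast_zero,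
        zero_mul, pow_zero, Nat.add_sub_cancel, mul_one, Nat.mul_one]
      push_cast
      ring
    | (j+1) =>
      simp only [hw, if_neg (Nat.succ_ne_zero j), if_neg (Nat.succ_ne_zero (j+1)),
        Nat.add_sub_cancel]
      have e1 : ((j+1 : ℕ) : ℝ) * (n.choose (j+1) : ℝ) = ((n * ((n-1).choose j) : ℕ) : ℝ) := by
        rw [succ_choose_cast n j hn]; push_cast; ring
      have e2 : ((n - (j+1) : ℕ) : ℝ) * (n.choose (j+1) : ℝ)
          = ((n * ((n-1).choose (j+1)) : ℕ) : ℝ) := by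
        rw [sub_choose_cast n j hn]; push_cast; ring
      calc (n.choose (j+1) : ℝ) * (((j+1 : ℕ) : ℝ) * x ^ (j+1-1) * (1-x) ^ (n-(j+1))
            - x ^ (j+1) * (((n-(j+1) : ℕ) : ℝ) * (1-x) ^ (n-(j+1)-1)))
          = (((j+1 : ℕ):ℝ) * (n.choose (j+1) : ℝ)) * x ^ j * (1-x) ^ (n-(j+1))
            - (((n-(j+1) : ℕ) : ℝ) * (n.choose (j+1) : ℝ)) * x ^ (j+1) * (1-x) ^ (n-(j+1)-1) := by
            push_cast; ring
        _ = ((n * ((n-1).choose j) : ℕ) : ℝ) * x ^ j * (1-x) ^ (n-(j+1))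
            - ((n * ((n-1).choose (j+1)) : ℕ) : ℝ) * x ^ (j+1) * (1-x) ^ (n-(j+1)-1) := by
            rw [e1, e2]
        _ = _ := by rw [show n - (j+1) - 1 = n - (j+1+1) from by omega]
  have hsum2 : (∑ k ∈ Finset.range (T+1),
      (n.choose k : ℝ) * ((k : ℝ) * x ^ (k-1) * (1-x) ^ (n-k)
        - x ^ k * (((n-k : ℕ) : ℝ) * (1-x) ^ (n-k-1))))
      = -(((n * (n-1).choose T : ℕ)) : ℝ) * x ^ T * (1 - x) ^ (n - 1 - T) := by
    rw [Finset.sum_congr rfl htel, Finset.sum_range_sub' w (T+1)]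
    simp only [hw, if_pos rfl, if_neg (Nat.succ_ne_zero T), Nat.add_sub_cancel]
    rw [show n - (T+1) = n - 1 - T from by omega]
    ring
  rw [hsum2] at hsum
  exact hsum


/-- Up-down principle: if positivity of the derivative at a later point forces
nonnegativity at earlier points, then the min of `g` on `[a,b]` is at an endpoint. -/
lemma updown {g : ℝ → ℝ} {a b : ℝ}
    (hd : ∀ x ∈ Set.Ioo a b, DifferentiableAt ℝ g x)
    (hc : ContinuousOn g (Set.Icc a b))
    (H : ∀ z ∈ Set.Ioo a b, ∀ y ∈ Set.Ioo a b, z ≤ y → 0 < deriv g y → 0 ≤ deriv g z) :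
    ∀ x ∈ Set.Icc a b, min (g a) (g b) ≤ g x := by
  intro x hx
  by_cases hpos : ∃ y ∈ Set.Ioo x b, 0 < deriv g y
  · obtain ⟨y, hy, hdy⟩ := hpos
    have hyab : y ∈ Set.Ioo a b := ⟨lt_of_le_of_lt hx.1 hy.1, hy.2⟩
    have hmono : MonotoneOn g (Set.Icc a x) := by
      apply monotoneOn_of_deriv_nonneg (convex_Icc a x)
      · exact hc.mono (Set.Icc_subset_Icc le_rfl hx.2)
      · intro z hz
        rw [interior_Icc] at hz
        exact (hd z ⟨hz.1, lt_of_lt_of_le hz.2 hx.2⟩).differentiableWithinAt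
      · intro z hz
        rw [interior_Icc] at hz
        have hzab : z ∈ Set.Ioo a b := ⟨hz.1, lt_of_lt_of_le hz.2 hx.2⟩
        exact H z hzab y hyab (le_trans hz.2.le hy.1.le) hdy
    have := hmono ⟨le_rfl, hx.1⟩ ⟨hx.1, le_rfl⟩ hx.1
    exact le_trans (min_le_left _ _) this
  · push_neg at hpos
    have hanti : AntitoneOn g (Set.Icc x b) := by
      apply antitoneOn_of_deriv_nonpos (convex_Icc x b)
      · exact hc.mono (Set.Icc_subset_Icc hx.1 le_rfl)
      · intro z hz
        rw [interior_Icc] at hz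
        exact (hd z ⟨lt_of_le_of_lt hx.1 hz.1, hz.2⟩).differentiableWithinAt
      · intro z hz
        rw [interior_Icc] at hz
        exact hpos z hz
    have := hanti ⟨le_rfl, hx.2⟩ ⟨hx.2, le_rfl⟩ hx.2
    exact le_trans (min_le_right _ _) this

/-- core ratio bound: `((N-z)/(N-y))^m ≤ exp (y - z)` for `0 ≤ z ≤ y < N`, `m ≤ N - y`. -/
lemma ratio_pow_le_exp (N z y : ℝ) (m : ℕ) (hz : 0 ≤ z) (hzy : z ≤ y) (hyN : y < N)
    (hm : (m : ℝ) ≤ N - y) : ((N - z)/(N - y)) ^ m ≤ Real.exp (y - z) := by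
  have hNy : 0 < N - y := by linarith
  have hbase : (N - z)/(N - y) = 1 + (y - z)/(N - y) := by field_simp; ring
  have h1 : (N - z)/(N - y) ≤ Real.exp ((y - z)/(N - y)) := by
    rw [hbase]
    have := Real.add_one_le_exp ((y - z)/(N - y))
    linarith
  have hb0 : (0:ℝ) ≤ (N - z)/(N - y) := by
    apply div_nonneg <;> linarith
  calc ((N - z)/(N - y)) ^ m ≤ (Real.exp ((y - z)/(N - y))) ^ m :=
        pow_le_pow_left₀ hb0 h1 m
    _ = Real.exp ((m : ℝ) * ((y - z)/(N - y))) := by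
        rw [← Real.exp_nat_mul]
    _ ≤ Real.exp (y - z) := by
        apply Real.exp_le_exp.mpr
        have h2 : (m:ℝ) * ((y - z)/(N - y)) ≤ (N - y) * ((y - z)/(N - y)) :=
          mul_le_mul_of_nonneg_right hm (div_nonneg (by linarith) hNy.le)
        have h3 : (N - y) * ((y - z)/(N - y)) = y - z := by field_simp
        linarith

lemma binCDF_zero (n T : ℕ) : binCDF n T 0 = 1 := by
  unfold binCDF
  rw [Finset.sum_eq_single 0]
  · simp
  · intro k _ hk
    rcases Nat.exists_eq_succ_of_ne_zero hk with ⟨j, rfl⟩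
    simp [zero_pow]
  · intro h; simp at h

lemma poisCDF_zero (T : ℕ) : poisCDF T 0 = 1 := by
  unfold poisCDF
  rw [Finset.sum_eq_single 0]
  · simp
  · intro k _ hk
    rcases Nat.exists_eq_succ_of_ne_zero hk with ⟨j, rfl⟩
    simp [zero_pow]
  · intro h; simp at h

lemma step2 (n T : ℕ) (hT : T < n)
    (hcrux : poisCDF T (T : ℝ) ≤ binCDF n T ((T : ℝ)/(n : ℝ)))
    (x : ℝ) (hx : 0 ≤ x) (hxT : (n : ℝ) * x ≤ (T : ℝ)) :
    poisCDF T ((n : ℝ) * x) ≤ binCDF n T x := by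
  have hn : 0 < n := by omega
  have hnR : (0:ℝ) < n := by exact_mod_cast hn
  set m : ℕ := n - 1 - T with hm
  set K : ℝ := ((n * (n-1).choose T : ℕ) : ℝ) with hK
  have hK0 : 0 ≤ K := by positivity
  set c : ℝ := K / (n:ℝ) ^ (T+1) with hc
  have hc0 : 0 ≤ c := by positivity
  set g : ℝ → ℝ := fun l => binCDF n T (l / n) - poisCDF T l with hg
  have hgd : ∀ l : ℝ, HasDerivAt g
      (l ^ T * (Real.exp (-l) / (T.factorial : ℝ) - c * (1 - l/n) ^ m)) l := by
    intro l
    have h0 := (binCDF_hasDerivAt n T hT (l/n)).comp l ((hasDerivAt_id l).div_const (n:ℝ))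
    have h1 : HasDerivAt (fun y : ℝ => binCDF n T (y / n))
        ((-K * (l/n) ^ T * (1 - l/n) ^ m) * (1/n)) l := h0
    have h2 := hasDerivAt_poisCDF T l
    have h3 : HasDerivAt g _ l := h1.sub h2
    convert h3 using 1
    have hTf : (T.factorial : ℝ) ≠ 0 := by positivity
    rw [hc, div_pow, pow_succ]
    field_simp
    ring
  have hdiff : ∀ l : ℝ, DifferentiableAt ℝ g l := fun l => (hgd l).differentiableAt
  have hH : ∀ z ∈ Set.Ioo (0:ℝ) (T:ℝ), ∀ y ∈ Set.Ioo (0:ℝ) (T:ℝ), z ≤ y →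
      0 < deriv g y → 0 ≤ deriv g z := by
    intro z hz y hy hzy hdy
    rw [(hgd y).deriv] at hdy
    rw [(hgd z).deriv]
    have hz0 : 0 < z := hz.1
    have hy0 : 0 < y := hy.1
    have hyT : y < T := hy.2
    have hTn : (T:ℝ) < n := by exact_mod_cast hT
    have hyn : y < n := lt_trans hyT hTn
    have hzn : z < n := lt_of_le_of_lt hzy hyn
    have hd1 : 0 < Real.exp (-y) / (T.factorial : ℝ) - c * (1 - y/n) ^ m := by
      by_contra hcon
      push_neg at hcon
      have : y ^ T * (Real.exp (-y) / (T.factorial : ℝ) - c * (1 - y/n) ^ m) ≤ 0 :=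
        mul_nonpos_of_nonneg_of_nonpos (by positivity) hcon
      linarith
    apply mul_nonneg (by positivity)
    -- main comparison
    have hmle : (m : ℝ) ≤ (n:ℝ) - y := by
      have : (m:ℝ) ≤ (n:ℝ) - 1 - T := by
        rw [hm]
        have h1 : ((n - 1 - T : ℕ):ℝ) = (n:ℝ) - 1 - T := by
          have : T ≤ n - 1 := by omega
          push_cast [Nat.cast_sub (by omega : 1 ≤ n), Nat.cast_sub this]
          ring
        rw [h1]
      linarith
    have hratio : ((( (n:ℝ) - z)/((n:ℝ) - y)) : ℝ) ^ m ≤ Real.exp (y - z) :=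
      ratio_pow_le_exp (n:ℝ) z y m hz0.le hzy hyn hmle
    have hny : (0:ℝ) < (n:ℝ) - y := by linarith
    have e1 : (1 - z/n) ^ m = (1 - y/n) ^ m * (((n:ℝ) - z)/((n:ℝ) - y)) ^ m := by
      rw [← mul_pow]
      congr 1
      field_simp
    have h1y : (0:ℝ) ≤ (1 - y/n) := by
      rw [sub_nonneg, div_le_one hnR]; linarith
    have key : c * (1 - z/n) ^ m ≤ Real.exp (-z) / (T.factorial : ℝ) := by
      rw [e1, ← mul_assoc]
      calc c * (1 - y/n) ^ m * (((n:ℝ) - z)/((n:ℝ) - y)) ^ m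
          ≤ (Real.exp (-y) / (T.factorial : ℝ)) * Real.exp (y - z) := by
            apply mul_le_mul (le_of_lt (by linarith)) hratio
              (pow_nonneg (div_nonneg (by linarith) (by linarith)) m) (by positivity)
        _ = Real.exp (-z) / (T.factorial : ℝ) := by
            rw [div_mul_eq_mul_div, ← Real.exp_add,
              show -y + (y - z) = -z from by ring]
    linarith
  have h0T : (0:ℝ) ≤ (T:ℝ) := Nat.cast_nonneg T
  have hmin := updown (fun l _ => hdiff l)
      (fun l _ => (hdiff l).continuousAt.continuousWithinAt) hH
      ((n:ℝ) * x) ⟨by positivity, hxT⟩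
  have hg0 : g 0 = 0 := by
    simp only [hg]
    rw [zero_div, binCDF_zero, poisCDF_zero]
    ring
  have hgT : 0 ≤ g (T:ℝ) := by
    simp only [hg]
    linarith [hcrux]
  have hmin0 : (0:ℝ) ≤ g ((n:ℝ) * x) := by
    have := hmin
    rw [hg0] at this
    have : min 0 (g (T:ℝ)) ≤ g ((n:ℝ)*x) := this
    have hmm : (0:ℝ) ≤ min 0 (g (T:ℝ)) := le_min le_rfl hgT
    linarith
  simp only [hg] at hmin0
  have hcancel : (n:ℝ) * x / n = x := by field_simp
  rw [hcancel] at hmin0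
  linarith


lemma binCDF_succ (n T : ℕ) (hT : T ≤ n) (x : ℝ) :
    binCDF (n+1) T x = binCDF n T x - (n.choose T : ℝ) * x ^ (T+1) * (1-x) ^ (n-T) := by
  set v : ℕ → ℝ := fun k =>
    if k = 0 then 0 else (n.choose (k-1) : ℝ) * x ^ k * (1-x) ^ (n+1-k) with hv
  have hdiff : ∀ k ∈ Finset.range (T+1),
      ((n+1).choose k : ℝ) * x ^ k * (1-x) ^ (n+1-k)
        - (n.choose k : ℝ) * x ^ k * (1-x) ^ (n-k) = v k - v (k+1) := by
    intro k hk
    have hkT : k ≤ T := Nat.lt_succ_iff.mp (Finset.mem_range.mp hk)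
    have hkn : k ≤ n := le_trans hkT hT
    match k with
    | 0 =>
      simp only [hv, if_pos rfl, if_neg (Nat.succ_ne_zero 0)]
      simp only [Nat.choose_zero_right, Nat.cast_one, one_mul, pow_zero, Nat.sub_zero,
        Nat.add_sub_cancel, mul_one]
      have : (1-x) ^ (n+1) = (1-x) ^ n * (1-x) := pow_succ (1-x) n
      rw [this]
      ring
    | (j+1) =>
      simp only [hv, if_neg (Nat.succ_ne_zero j), if_neg (Nat.succ_ne_zero (j+1)),
        Nat.add_sub_cancel]
      have hps : (n+1).choose (j+1) = n.choose j + n.choose (j+1) := Nat.choose_succ_succ n j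
      have hjn : j + 1 ≤ n := hkn
      have e1 : n + 1 - (j+1) = n - j := by omega
      have e2 : n - (j+1) = n - j - 1 := by omega
      have e3 : n - j = (n - j - 1) + 1 := by omega
      have e4 : n + 1 - (j + 1 + 1) = n - j - 1 := by omega
      rw [hps, e4, e1, e2, e3]
      have hpow : (1-x) ^ ((n-j-1)+1) = (1-x) ^ (n-j-1) * (1-x) := pow_succ (1-x) (n-j-1)
      rw [hpow]
      push_cast
      ring
  have hsum : binCDF (n+1) T x - binCDF n T x
      = ∑ k ∈ Finset.range (T+1),
        (((n+1).choose k : ℝ) * x ^ k * (1-x) ^ (n+1-k)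
          - (n.choose k : ℝ) * x ^ k * (1-x) ^ (n-k)) := by
    unfold binCDF
    rw [Finset.sum_sub_distrib]
  rw [Finset.sum_congr rfl hdiff, Finset.sum_range_sub' v (T+1)] at hsum
  simp only [hv, if_pos rfl, if_neg (Nat.succ_ne_zero T), Nat.add_sub_cancel] at hsum
  have : n + 1 - (T+1) = n - T := by omega
  rw [this] at hsum
  linarith


lemma two_sub_mul_exp_le (z : ℝ) (hz : 0 ≤ z) : (2 - z) * Real.exp z ≤ 2 + z := by
  set φ' : ℝ → ℝ := fun s => 1 + (s - 1) * Real.exp s with hφ'def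
  have hd2 : ∀ t : ℝ, HasDerivAt φ' (t * Real.exp t) t := by
    intro t
    have h1 : HasDerivAt (fun s : ℝ => (s - 1) * Real.exp s)
        (1 * Real.exp t + (t - 1) * Real.exp t) t :=
      ((hasDerivAt_id t).sub_const 1).mul (Real.hasDerivAt_exp t)
    have h2 : HasDerivAt φ' _ t := (hasDerivAt_const t (1:ℝ)).add h1
    convert h2 using 1
    ring
  have hmono1 : MonotoneOn φ' (Set.Ici 0) := by
    apply monotoneOn_of_deriv_nonneg (convex_Ici 0)
    · exact fun t _ => (hd2 t).continuousAt.continuousWithinAt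
    · exact fun t _ => (hd2 t).differentiableAt.differentiableWithinAt
    · intro t ht
      rw [interior_Ici] at ht
      rw [(hd2 t).deriv]
      have : (0:ℝ) < t := ht
      positivity
  have hφ'0 : φ' 0 = 0 := by simp [hφ'def]
  have hφ'nonneg : ∀ t : ℝ, 0 ≤ t → 0 ≤ φ' t := by
    intro t ht
    have := hmono1 (Set.self_mem_Ici) (Set.mem_Ici.mpr ht) ht
    rw [hφ'0] at this
    exact this
  set φ : ℝ → ℝ := fun s => 2 + s - (2 - s) * Real.exp s with hφdef
  have hd1 : ∀ t : ℝ, HasDerivAt φ (φ' t) t := by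
    intro t
    have h1 : HasDerivAt (fun s : ℝ => 2 + s) 1 t := by
      exact (hasDerivAt_id' t).const_add (2:ℝ)
    have h2 : HasDerivAt (fun s : ℝ => (2 - s) * Real.exp s)
        ((-1) * Real.exp t + (2 - t) * Real.exp t) t := by
      exact ((hasDerivAt_id' t).const_sub (2:ℝ)).mul (Real.hasDerivAt_exp t)
    have h3 : HasDerivAt φ _ t := h1.sub h2
    convert h3 using 1
    simp only [hφ'def]
    ring
  have hmono2 : MonotoneOn φ (Set.Ici 0) := by
    apply monotoneOn_of_deriv_nonneg (convex_Ici 0)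
    · exact fun t _ => (hd1 t).continuousAt.continuousWithinAt
    · exact fun t _ => (hd1 t).differentiableAt.differentiableWithinAt
    · intro t ht
      rw [interior_Ici] at ht
      rw [(hd1 t).deriv]
      exact hφ'nonneg t (le_of_lt ht)
  have hφ0 : φ 0 = 0 := by simp [hφdef]
  have := hmono2 (Set.self_mem_Ici) (Set.mem_Ici.mpr hz) hz
  rw [hφ0] at this
  simp only [hφdef] at this
  linarith

lemma exp_pade (w : ℝ) (hw : 0 ≤ w) : Real.exp (2*w/(1+w)) ≤ 1 + 2*w := by
  have hw1 : (0:ℝ) < 1 + w := by linarith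
  set z : ℝ := 2*w/(1+w) with hzdef
  have hz0 : 0 ≤ z := by positivity
  have hz2 : z < 2 := by
    rw [hzdef, div_lt_iff₀ hw1]
    linarith
  have hkey := two_sub_mul_exp_le z hz0
  have h2z : (0:ℝ) < 2 - z := by linarith
  have heq : (2 + z) = (1 + 2*w) * (2 - z) := by
    rw [hzdef]
    field_simp
    ring
  rw [heq] at hkey
  rw [mul_comm] at hkey
  exact le_of_mul_le_mul_right hkey h2z

lemma ptbound (T mm : ℕ) (p t : ℝ) (hp : 0 < p) (hpt : p ≤ t) (ht1 : t ≤ 1) (hp1 : p < 1) :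
    t^T * (1-t)^mm ≤ p^T * (1-p)^mm * Real.exp (((T:ℝ)/p - (mm:ℝ)/(1-p))*(t-p)) := by
  have h1p : (0:ℝ) < 1 - p := by linarith
  have h1 : t^T ≤ p^T * Real.exp ((T:ℝ)*((t-p)/p)) := by
    have hq : t/p ≤ Real.exp ((t-p)/p) := by
      have := Real.add_one_le_exp ((t-p)/p)
      have he : (t-p)/p + 1 = t/p := by field_simp; ring
      linarith [he ▸ this]
    have hq0 : (0:ℝ) ≤ t/p := div_nonneg (by linarith) hp.le
    calc t^T = p^T * (t/p)^T := by
          rw [div_pow]; field_simp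
      _ ≤ p^T * (Real.exp ((t-p)/p))^T := by
          apply mul_le_mul_of_nonneg_left (pow_le_pow_left₀ hq0 hq T) (by positivity)
      _ = p^T * Real.exp ((T:ℝ)*((t-p)/p)) := by
          rw [← Real.exp_nat_mul]
  have h2 : (1-t)^mm ≤ (1-p)^mm * Real.exp (-(mm:ℝ)*((t-p)/(1-p))) := by
    have hq : (1-t)/(1-p) ≤ Real.exp (-((t-p)/(1-p))) := by
      have := Real.add_one_le_exp (-((t-p)/(1-p)))
      have he : -((t-p)/(1-p)) + 1 = (1-t)/(1-p) := by field_simp; ring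
      linarith [he ▸ this]
    have hq0 : (0:ℝ) ≤ (1-t)/(1-p) := by
      apply div_nonneg (by linarith) h1p.le
    calc (1-t)^mm = (1-p)^mm * ((1-t)/(1-p))^mm := by
          rw [div_pow]; field_simp
      _ ≤ (1-p)^mm * (Real.exp (-((t-p)/(1-p))))^mm := by
          apply mul_le_mul_of_nonneg_left (pow_le_pow_left₀ hq0 hq mm) (by positivity)
      _ = (1-p)^mm * Real.exp (-(mm:ℝ)*((t-p)/(1-p))) := by
          rw [← Real.exp_nat_mul]; ring_nf
  calc t^T * (1-t)^mm
      ≤ (p^T * Real.exp ((T:ℝ)*((t-p)/p))) * ((1-p)^mm * Real.exp (-(mm:ℝ)*((t-p)/(1-p)))) := by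
        apply mul_le_mul h1 h2 (pow_nonneg (by linarith) mm) (by positivity)
    _ = p^T * (1-p)^mm * Real.exp ((T:ℝ)*((t-p)/p) + (-(mm:ℝ)*((t-p)/(1-p)))) := by
        rw [Real.exp_add]; ring
    _ = p^T * (1-p)^mm * Real.exp (((T:ℝ)/p - (mm:ℝ)/(1-p))*(t-p)) := by
        congr 1
        field_simp
        ring

lemma step_anti (n T : ℕ) (hT : T < n) (hT1 : 1 ≤ T) :
    binCDF (n+1) T ((T:ℝ)/((n:ℝ)+1)) ≤ binCDF n T ((T:ℝ)/(n:ℝ)) := by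
  have hn1 : 1 ≤ n := by omega
  have hN0 : (0:ℝ) < (n:ℝ) := by exact_mod_cast (by omega : 0 < n)
  have hTrN : (T:ℝ) + 1 ≤ (n:ℝ) := by exact_mod_cast (by omega : T + 1 ≤ n)
  have hTr1 : (1:ℝ) ≤ (T:ℝ) := by exact_mod_cast hT1
  set N := (n:ℝ) with hNdef
  set Tr := (T:ℝ) with hTrdef
  set p : ℝ := Tr/(N+1) with hpdef
  set p' : ℝ := Tr/N with hp'def
  have hp0 : 0 < p := div_pos (by linarith) (by linarith)
  have hpp' : p < p' := by
    apply div_lt_div_of_pos_left (by linarith) hN0 (by linarith)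
  have hp'1 : p' < 1 := by rw [hp'def, div_lt_one hN0]; linarith
  have hp1 : p < 1 := lt_trans hpp' hp'1
  have h1p : 0 < 1 - p := by linarith
  have hNT : 0 < N - Tr := by linarith
  have hNT1 : 0 < N + 1 - Tr := by linarith
  set mm : ℕ := n - 1 - T with hmm
  have hmm' : mm + 1 + T = n := by omega
  have hmmR : (mm:ℝ) = N - 1 - Tr := by
    have := congrArg (Nat.cast : ℕ → ℝ) hmm'
    push_cast at this
    linarith
  set m₀ : ℝ := Tr/p - (mm:ℝ)/(1-p) with hm₀def
  have hm₀eq : m₀ = 2*(N+1)/(N+1-Tr) := by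
    rw [hm₀def, hmmR, hpdef]
    field_simp
    ring
  have hm₀ : 0 < m₀ := by rw [hm₀eq]; positivity
  set K : ℝ := ((n * (n-1).choose T : ℕ):ℝ) with hK
  have hK0 : 0 ≤ K := Nat.cast_nonneg _
  have hKC : K = (N - Tr) * (n.choose T : ℝ) := by
    obtain ⟨j, hj⟩ : ∃ j, T = j + 1 := ⟨T - 1, by omega⟩
    subst hj
    have hsc := sub_choose_cast n j hn1
    have hc : ((n - (j+1) : ℕ):ℝ) = N - Tr := by
      have h2 : (n - (j+1)) + (j+1) = n := by omega
      have h3 := congrArg (Nat.cast : ℕ → ℝ) h2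
      push_cast at h3
      rw [hNdef, hTrdef]
      push_cast
      linarith
    calc K = (n:ℝ) * (((n-1).choose (j+1)) : ℝ) := by rw [hK]; push_cast; ring
      _ = ((n - (j+1) : ℕ):ℝ) * (n.choose (j+1) : ℝ) := hsc.symm
      _ = (N - Tr) * (n.choose (j+1) : ℝ) := by rw [hc]
  set A : ℝ := K * p^T * (1-p)^mm with hA
  have hA0 : 0 ≤ A := by
    apply mul_nonneg (mul_nonneg hK0 (by positivity)) (pow_nonneg h1p.le mm)
  set Φ : ℝ → ℝ := fun t => binCDF n T t + (A/m₀) * Real.exp (m₀*(t-p)) with hΦ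
  have hΦd : ∀ t : ℝ, HasDerivAt Φ
      (-K * t^T * (1-t)^mm + A * Real.exp (m₀*(t-p))) t := by
    intro t
    have h1 : HasDerivAt (binCDF n T) (-K * t^T * (1-t)^mm) t := binCDF_hasDerivAt n T hT t
    have hin : HasDerivAt (fun s : ℝ => m₀*(s-p)) (m₀*1) t :=
      ((hasDerivAt_id t).sub_const p).const_mul m₀
    have hexp := (Real.hasDerivAt_exp (m₀*(t-p))).comp t hin
    have h2' : HasDerivAt (fun s : ℝ => (A/m₀) * Real.exp (m₀*(s-p))) _ t := hexp.const_mul (A/m₀)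
    have h2 : HasDerivAt (fun s : ℝ => (A/m₀) * Real.exp (m₀*(s-p)))
        (A * Real.exp (m₀*(t-p))) t := by
      convert h2' using 1
      field_simp
    exact h1.add h2
  have hmono : MonotoneOn Φ (Set.Icc p p') := by
    apply monotoneOn_of_deriv_nonneg (convex_Icc p p')
    · exact fun t _ => (hΦd t).continuousAt.continuousWithinAt
    · intro t ht
      exact (hΦd t).differentiableAt.differentiableWithinAt
    · intro t ht
      rw [interior_Icc] at ht
      rw [(hΦd t).deriv]
      have htp : p ≤ t := ht.1.le
      have ht1 : t ≤ 1 := le_of_lt (lt_trans ht.2 hp'1)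
      have hpt := ptbound T mm p t hp0 htp ht1 hp1
      have h2' : K*(t^T*(1-t)^mm) ≤ A * Real.exp (m₀*(t-p)) := by
        calc K*(t^T*(1-t)^mm)
            ≤ K*(p^T * (1-p)^mm * Real.exp ((Tr/p - (mm:ℝ)/(1-p))*(t-p))) :=
              mul_le_mul_of_nonneg_left hpt hK0
          _ = A * Real.exp (m₀*(t-p)) := by rw [hA, hm₀def]; ring
      have hre : -K * t^T * (1-t)^mm + A * Real.exp (m₀*(t-p))
          = A * Real.exp (m₀*(t-p)) - K*(t^T*(1-t)^mm) := by ring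
      rw [hre]
      linarith
  have hΦle := hmono (Set.mem_Icc.mpr ⟨le_rfl, hpp'.le⟩)
    (Set.mem_Icc.mpr ⟨hpp'.le, le_rfl⟩) hpp'.le
  simp only [hΦ] at hΦle
  have e0 : Real.exp (m₀*(p-p)) = 1 := by norm_num
  rw [e0, mul_one] at hΦle
  have hstep : binCDF n T p - binCDF n T p' ≤ (A/m₀)*(Real.exp (m₀*(p'-p)) - 1) := by
    have hr : (A/m₀)*(Real.exp (m₀*(p'-p)) - 1)
        = (A/m₀)*Real.exp (m₀*(p'-p)) - A/m₀ := by ring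
    rw [hr]
    linarith
  -- final algebra
  set w : ℝ := Tr/((N+1)*(N-Tr)) with hwdef
  have hw0 : 0 ≤ w := by positivity
  have hzeq : m₀*(p'-p) = 2*w/(1+w) := by
    have h1w : (0:ℝ) < 1 + w := by linarith
    rw [hm₀eq, hp'def, hpdef, hwdef]
    rw [div_sub_div _ _ hN0.ne' (by linarith : N + 1 ≠ 0)]
    field_simp
    ring
  have hexpz : Real.exp (m₀*(p'-p)) ≤ 1 + 2*w := by
    rw [hzeq]; exact exp_pade w hw0
  have hA2w : A*(2*w) = (n.choose T:ℝ)*p^(T+1)*(1-p)^(n-T)*m₀ := by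
    have hnT : n - T = mm + 1 := by omega
    rw [hA, hKC, hnT, pow_succ, pow_succ]
    have hm₀p : m₀*(p*(1-p)) = (N - Tr)*(2*w) := by
      rw [hm₀eq, hpdef, hwdef]
      field_simp
    linear_combination ((n.choose T:ℝ) * p^T * (1-p)^mm) * hm₀p.symm
  have hfinal : (A/m₀)*(Real.exp (m₀*(p'-p)) - 1)
      ≤ (n.choose T:ℝ)*p^(T+1)*(1-p)^(n-T) := by
    have h1 : (A/m₀)*(Real.exp (m₀*(p'-p)) - 1) ≤ (A/m₀)*(2*w) := by
      apply mul_le_mul_of_nonneg_left _ (div_nonneg hA0 hm₀.le)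
      linarith
    have h2 : (A/m₀)*(2*w) = (n.choose T:ℝ)*p^(T+1)*(1-p)^(n-T) := by
      rw [div_mul_eq_mul_div, hA2w, mul_div_assoc, div_self hm₀.ne', mul_one]
    linarith
  have hsucc := binCDF_succ n T hT.le p
  rw [hsucc]
  linarith

open Filter


lemma cast_choose_prod (n k : ℕ) (h : k ≤ n) :
    (n.choose k : ℝ) = (∏ i ∈ Finset.range k, ((n:ℝ) - i)) / (k.factorial : ℝ) := by
  have h1 : (n.descFactorial k : ℝ) = (k.factorial : ℝ) * (n.choose k : ℝ) := by
    exact_mod_cast congrArg (Nat.cast : ℕ → ℝ) (Nat.descFactorial_eq_factorial_mul_choose n k)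
  have h2 : (n.descFactorial k : ℝ) = ∏ i ∈ Finset.range k, ((n:ℝ) - i) := by
    rw [Nat.descFactorial_eq_prod_range]
    push_cast
    apply Finset.prod_congr rfl
    intro i hi
    have : i ≤ n := le_trans (Nat.lt_of_lt_of_le (Finset.mem_range.mp hi) h).le le_rfl
    rw [Nat.cast_sub this]
  have hf : (k.factorial : ℝ) ≠ 0 := by positivity
  field_simp
  rw [← h2, h1]
  ring

lemma binCDF_term_tendsto (T k : ℕ) (hk : k ≤ T) :
    Tendsto (fun n : ℕ => (n.choose k : ℝ) * ((T:ℝ)/(n:ℝ)) ^ k * (1 - (T:ℝ)/(n:ℝ)) ^ (n - k))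
      atTop (nhds (Real.exp (-(T:ℝ)) * ((T:ℝ) ^ k / (k.factorial : ℝ)))) := by
  set Tr := (T:ℝ) with hTr
  -- eventual form
  have hev : ∀ᶠ n : ℕ in atTop,
      (n.choose k : ℝ) * (Tr/(n:ℝ)) ^ k * (1 - Tr/(n:ℝ)) ^ (n - k)
      = ((∏ i ∈ Finset.range k, (1 - (i:ℝ)/(n:ℝ))) * (Tr ^ k / (k.factorial : ℝ)))
        * ((1 - Tr/(n:ℝ)) ^ n / (1 - Tr/(n:ℝ)) ^ k) := by
    filter_upwards [eventually_ge_atTop (T+1)] with n hn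
    have hkn : k ≤ n := by omega
    have hN0 : (0:ℝ) < (n:ℝ) := by exact_mod_cast (by omega : 0 < n)
    have hTn : Tr < (n:ℝ) := by
      simp only [hTr]
      exact_mod_cast (by omega : T < n)
    have hbase : (0:ℝ) < 1 - Tr/(n:ℝ) := by
      rw [sub_pos, div_lt_one hN0]; exact hTn
    rw [cast_choose_prod n k hkn, pow_sub₀ _ hbase.ne' hkn]
    have hprod : (∏ i ∈ Finset.range k, ((n:ℝ) - i)) * (Tr/(n:ℝ)) ^ k
        = (∏ i ∈ Finset.range k, (1 - (i:ℝ)/(n:ℝ))) * Tr ^ k := by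
      have e : ∀ i ∈ Finset.range k, (1 - (i:ℝ)/(n:ℝ)) = ((n:ℝ) - i)/(n:ℝ) := by
        intro i _; field_simp
      rw [Finset.prod_congr rfl e, Finset.prod_div_distrib, Finset.prod_const,
        Finset.card_range, div_pow]
      field_simp
    have hkf : (k.factorial : ℝ) ≠ 0 := by positivity
    rw [div_eq_mul_inv ((1 - Tr/(n:ℝ)) ^ n) _]
    linear_combination (((1 - Tr/(n:ℝ)) ^ n * ((1 - Tr/(n:ℝ)) ^ k)⁻¹) / (k.factorial:ℝ)) * hprod
  have hev' : (fun n : ℕ => (n.choose k : ℝ) * (Tr/(n:ℝ)) ^ k * (1 - Tr/(n:ℝ)) ^ (n - k))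
      =ᶠ[atTop] (fun n : ℕ => ((∏ i ∈ Finset.range k, (1 - (i:ℝ)/(n:ℝ)))
        * (Tr ^ k / (k.factorial : ℝ))) * ((1 - Tr/(n:ℝ)) ^ n / (1 - Tr/(n:ℝ)) ^ k)) := hev
  apply Tendsto.congr' hev'.symm
  -- limits of pieces
  have hL1 : Tendsto (fun n : ℕ => ∏ i ∈ Finset.range k, (1 - (i:ℝ)/(n:ℝ))) atTop (nhds 1) := by
    have : Tendsto (fun n : ℕ => ∏ i ∈ Finset.range k, (1 - (i:ℝ)/(n:ℝ))) atTop
        (nhds (∏ i ∈ Finset.range k, 1)) := by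
      apply tendsto_finset_prod
      intro i _
      have h0 := tendsto_const_div_atTop_nhds_zero_nat (i:ℝ)
      have := h0.const_sub 1
      simpa using this
    simpa using this
  have hL2 : Tendsto (fun n : ℕ => (1 - Tr/(n:ℝ)) ^ n) atTop (nhds (Real.exp (-Tr))) := by
    have := Real.tendsto_one_add_div_pow_exp (-Tr)
    apply this.congr
    intro n
    congr 1
    ring
  have hL3 : Tendsto (fun n : ℕ => (1 - Tr/(n:ℝ)) ^ k) atTop (nhds 1) := by
    have h0 := tendsto_const_div_atTop_nhds_zero_nat Tr
    have h1 := (h0.const_sub 1)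
    have h2 : Tendsto (fun n : ℕ => 1 - Tr/(n:ℝ)) atTop (nhds 1) := by simpa using h1
    simpa using h2.pow k
  have hL := ((hL1.mul_const (Tr ^ k / (k.factorial : ℝ))).mul (hL2.div hL3 one_ne_zero))
  have : (1 : ℝ) * (Tr ^ k / (k.factorial : ℝ)) * (Real.exp (-Tr) / 1)
      = Real.exp (-Tr) * (Tr ^ k / (k.factorial : ℝ)) := by ring
  rw [this] at hL
  apply hL.congr
  intro n
  simp [Pi.div_apply]

lemma binCDF_tendsto_poisCDF (T : ℕ) :
    Tendsto (fun n : ℕ => binCDF n T ((T:ℝ)/(n:ℝ))) atTop (nhds (poisCDF T (T:ℝ))) := by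
  have hrw : poisCDF T (T:ℝ)
      = ∑ k ∈ Finset.range (T+1), Real.exp (-(T:ℝ)) * ((T:ℝ) ^ k / (k.factorial : ℝ)) := by
    unfold poisCDF
    rw [Finset.mul_sum]
  rw [hrw]
  exact tendsto_finset_sum _ (fun k hk =>
    binCDF_term_tendsto T k (Nat.lt_succ_iff.mp (Finset.mem_range.mp hk)))

lemma crux (n T : ℕ) (hT : T < n) : poisCDF T (T:ℝ) ≤ binCDF n T ((T:ℝ)/(n:ℝ)) := by
  rcases Nat.eq_zero_or_pos T with h0 | hT1
  · subst h0
    simp only [Nat.cast_zero, zero_div]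
    rw [binCDF_zero, poisCDF_zero]
  · have hmono : ∀ k : ℕ, binCDF (n+k) T ((T:ℝ)/((n+k : ℕ):ℝ)) ≤ binCDF n T ((T:ℝ)/(n:ℝ)) := by
      intro k
      induction k with
      | zero => simp
      | succ k ih =>
        have hstep := step_anti (n+k) T (by omega) hT1
        have hc1 : (((n+k:ℕ)):ℝ) + 1 = ((n+(k+1):ℕ):ℝ) := by push_cast; ring
        rw [hc1] at hstep
        exact le_trans hstep ih
    have hlim : Tendsto (fun k : ℕ => binCDF (k+n) T ((T:ℝ)/((k+n : ℕ):ℝ))) atTop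
        (nhds (poisCDF T (T:ℝ))) :=
      (binCDF_tendsto_poisCDF T).comp (tendsto_add_atTop_nat n)
    apply le_of_tendsto hlim
    filter_upwards with k
    have he : k + n = n + k := by omega
    rw [he]
    exact hmono k

/-- For `Z ~ Binomial(⌈M₁/(1-p)⌉, 1-p)`, `q ≥ 1-p` and an integer `T ≥ M₁ + q`,
`Pr[Z ≥ T+1] ≤ 1 - e^{-M₁-q} Σ_{i=0}^{T} (M₁+q)^i/i!`; moreover the right-hand side is
monotonically increasing in `q`. -/
theorem binomial_upper_tail_le (p q M1 : ℝ) (T : ℕ) (hp : 0 < p) (hp1 : p < 1)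
    (hM1 : 0 < M1) (hq : 1 - p ≤ q) (hT : M1 + q ≤ (T : ℝ)) :
    (∑ k ∈ Finset.Icc (T + 1) ⌈M1 / (1 - p)⌉₊,
        ((⌈M1 / (1 - p)⌉₊).choose k : ℝ) * (1 - p) ^ k * p ^ (⌈M1 / (1 - p)⌉₊ - k)) ≤
      1 - Real.exp (-M1 - q) * ∑ i ∈ Finset.range (T + 1), (M1 + q) ^ i / (i.factorial : ℝ) ∧
    ∀ q' q'' : ℝ, 1 - p ≤ q' → q' ≤ q'' →
      1 - Real.exp (-M1 - q') * ∑ i ∈ Finset.range (T + 1), (M1 + q') ^ i / (i.factorial : ℝ) ≤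
      1 - Real.exp (-M1 - q'') * ∑ i ∈ Finset.range (T + 1), (M1 + q'') ^ i / (i.factorial : ℝ) := by
  have hpois : ∀ r : ℝ, Real.exp (-M1 - r) * ∑ i ∈ Finset.range (T + 1),
      (M1 + r) ^ i / (i.factorial : ℝ) = poisCDF T (M1 + r) := by
    intro r
    unfold poisCDF
    rw [show -(M1 + r) = -M1 - r from by ring]
  constructor
  · -- main inequality
    set x : ℝ := 1 - p with hxdef
    have hx0 : 0 < x := by simp only [hxdef]; linarith
    have hx1 : x < 1 := by simp only [hxdef]; linarith
    set n : ℕ := ⌈M1 / x⌉₊ with hndef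
    have hl0 : 0 < M1 + q := by linarith
    rw [hpois q]
    -- p = 1 - x
    have hpx : p = 1 - x := by simp only [hxdef]; ring
    by_cases hnT : n ≤ T
    · -- empty sum case
      have hempty : Finset.Icc (T + 1) n = ∅ := by
        apply Finset.Icc_eq_empty
        omega
      rw [hempty, Finset.sum_empty]
      have hsum_le : ∑ i ∈ Finset.range (T + 1), (M1 + q) ^ i / (i.factorial : ℝ)
          ≤ Real.exp (M1 + q) := Real.sum_le_exp_of_nonneg hl0.le (T+1)
      have h1 : poisCDF T (M1 + q) ≤ 1 := by
        unfold poisCDF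
        calc Real.exp (-(M1+q)) * ∑ i ∈ Finset.range (T + 1), (M1 + q) ^ i / (i.factorial : ℝ)
            ≤ Real.exp (-(M1+q)) * Real.exp (M1 + q) :=
              mul_le_mul_of_nonneg_left hsum_le (Real.exp_nonneg _)
          _ = 1 := by
              rw [← Real.exp_add, show -(M1+q) + (M1+q) = 0 from by ring, Real.exp_zero]
      linarith
    · push_neg at hnT
      -- complement identity
      have hNn0 : (0:ℝ) < (n:ℝ) := by exact_mod_cast (by omega : 0 < n)
      have htotal : ∑ k ∈ Finset.range (n+1), (n.choose k : ℝ) * x ^ k * (1-x) ^ (n-k)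
          = 1 := by
        calc ∑ k ∈ Finset.range (n+1), (n.choose k : ℝ) * x ^ k * (1-x) ^ (n-k)
            = ∑ k ∈ Finset.range (n+1), x ^ k * (1-x) ^ (n-k) * (n.choose k : ℝ) := by
              apply Finset.sum_congr rfl; intro k _; ring
          _ = (x + (1-x)) ^ n := (add_pow x (1-x) n).symm
          _ = 1 := by norm_num
      have hsplit : ∑ k ∈ Finset.range (n+1), (n.choose k : ℝ) * x ^ k * (1-x) ^ (n-k)
          = binCDF n T x + ∑ k ∈ Finset.Icc (T+1) n,
            (n.choose k : ℝ) * x ^ k * (1-x) ^ (n-k) := by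
        unfold binCDF
        rw [Finset.range_eq_Ico, Finset.range_eq_Ico, ← Finset.Ico_add_one_right_eq_Icc,
          Finset.sum_Ico_consecutive _ (by omega : 0 ≤ T+1) (by omega : T+1 ≤ n+1)]
      have hLHS : ∑ k ∈ Finset.Icc (T + 1) n,
          (n.choose k : ℝ) * (1-p) ^ k * p ^ (n - k) = 1 - binCDF n T x := by
        rw [hpx]
        have : ∀ k ∈ Finset.Icc (T+1) n,
            (n.choose k : ℝ) * (1-(1-x)) ^ k * (1-x) ^ (n-k)
            = (n.choose k : ℝ) * x ^ k * (1-x) ^ (n-k) := by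
          intro k _; norm_num
        rw [Finset.sum_congr rfl this]
        linarith [htotal, hsplit]
      rw [hLHS]
      -- reduce to CDF comparison
      have hcomp : poisCDF T (M1 + q) ≤ binCDF n T x := by
        have hceil : (n:ℝ) < M1 / x + 1 := Nat.ceil_lt_add_one (by positivity)
        have hnx_le : (n:ℝ) * x ≤ M1 + q := by
          have h1 : (n:ℝ) * x < (M1 / x + 1) * x := by
            apply mul_lt_mul_of_pos_right hceil hx0
          have h2 : (M1 / x + 1) * x = M1 + x := by field_simp
          have h3 : x ≤ q := by simp only [hxdef]; linarith
          nlinarith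
        have hnx0 : 0 ≤ (n:ℝ) * x := by positivity
        have hnxT : (n:ℝ) * x ≤ (T:ℝ) := le_trans hnx_le hT
        have h1 : poisCDF T (M1 + q) ≤ poisCDF T ((n:ℝ) * x) :=
          poisCDF_antitoneOn T (Set.mem_Ici.mpr hnx0) (Set.mem_Ici.mpr hl0.le) hnx_le
        have h2 : poisCDF T ((n:ℝ) * x) ≤ binCDF n T x :=
          step2 n T hnT (crux n T hnT) x hx0.le hnxT
        linarith
      linarith
  · -- monotonicity in q
    intro q' q'' h1 h2
    rw [hpois q', hpois q'']
    have ha : 0 ≤ M1 + q' := by linarith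
    have hb : M1 + q' ≤ M1 + q'' := by linarith
    have := poisCDF_antitoneOn T (Set.mem_Ici.mpr ha)
      (Set.mem_Ici.mpr (le_trans ha hb)) hb
    linarith
end

section
/- Let p ∈ (0,1), M₂ ≥ 0 and T ≤ M₂ - 1 an integer, and let Z ~ Binomial(⌈M₂/(1-p)⌉, 1-p). Then Pr[Z ≤ T] ≤ e^{-M₂} Σ_{i=0}^{T} M₂^i / i!. Furthermore, for any q ≥ p such that M₂/(1-q) is an integer, Pr[Z ≤ T] ≤ Σ_{i=0}^{T} C(M₂/(1-q), i) (1-q)^i q^{M₂/(1-q) - i}. -/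
open Finset
set_option maxHeartbeats 1000000

/-- Lower-tail polynomial of `Bin(n, x)`: `Pr[Z < M]`. -/
noncomputable def binPoly (n M : ℕ) (x : ℝ) : ℝ :=
  ∑ k ∈ Finset.range M, (n.choose k : ℝ) * x ^ k * (1 - x) ^ (n - k)

/-- Derivative of `binPoly n M` in `x`. -/
noncomputable def binPolyD (n M : ℕ) (x : ℝ) : ℝ :=
  if M = 0 then 0 else
    -((n : ℝ) * (((n - 1).choose (M - 1) : ℕ) : ℝ) * x ^ (M - 1) * (1 - x) ^ (n - M))

lemma hasDerivAt_binTerm (n k : ℕ) (hk : k < n) (x : ℝ) :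
    HasDerivAt (fun x : ℝ => (n.choose k : ℝ) * x ^ k * (1 - x) ^ (n - k))
      (binPolyD n (k + 1) x - binPolyD n k x) x := by
  have hb : HasDerivAt (fun x : ℝ => (1 - x) ^ (n - k))
      (((n - k : ℕ) : ℝ) * (1 - x) ^ (n - k - 1) * (-1)) x := by
    exact (hasDerivAt_pow (n - k) (1 - x)).comp x
      (((hasDerivAt_id x).const_sub 1).congr_deriv (by norm_num))
  have ha : HasDerivAt (fun x : ℝ => (n.choose k : ℝ) * x ^ k)
      ((n.choose k : ℝ) * (((k : ℕ) : ℝ) * x ^ (k - 1))) x :=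
    (hasDerivAt_pow k x).const_mul _
  have h := ha.mul hb
  refine h.congr_deriv (Eq.symm ?_)
  have e1 : n - k - 1 = n - (k + 1) := by omega
  rcases Nat.eq_zero_or_pos k with hk0 | hk1
  · subst hk0
    simp only [binPolyD, if_neg (by omega : (0:ℕ)+1 ≠ 0), if_pos rfl, Nat.add_sub_cancel]
    rw [e1]
    simp
  · have id1 : ((k : ℝ)) * (n.choose k : ℝ) = (n : ℝ) * ((n - 1).choose (k - 1) : ℝ) := by
      have := Nat.add_one_mul_choose_eq (n - 1) (k - 1)
      have hn' : n - 1 + 1 = n := by omega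
      have hk' : k - 1 + 1 = k := by omega
      rw [hn', hk'] at this
      exact_mod_cast (by rw [this]; ring : (k : ℕ) * n.choose k = n * (n - 1).choose (k - 1))
    have id2 : (((n - k : ℕ)) : ℝ) * (n.choose k : ℝ) = (n : ℝ) * ((n - 1).choose k : ℝ) := by
      have := Nat.choose_mul_succ_eq (n - 1) k
      have hn' : n - 1 + 1 = n := by omega
      rw [hn'] at this
      exact_mod_cast (by rw [mul_comm ((n:ℕ)-k) _, ← this, mul_comm] :
        ((n - k : ℕ)) * n.choose k = n * (n - 1).choose k)
    have hMk : k + 1 ≠ 0 := by omega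
    have hk0' : k ≠ 0 := by omega
    simp only [binPolyD, if_neg hMk, if_neg hk0', Nat.add_sub_cancel]
    rw [e1]
    have hxk : x ^ k = x ^ (k - 1) * x := by
      conv_lhs => rw [← Nat.sub_add_cancel hk1, pow_succ]
    have hnk : (1 - x) ^ (n - k) = (1 - x) ^ (n - (k + 1)) * (1 - x) := by
      rw [← pow_succ]; congr 1; omega
    rw [hxk, hnk]
    linear_combination (-(x^(k-1)*(1-x)^(n-(k+1))*(1-x)))*id1 + (x^(k-1)*(1-x)^(n-(k+1))*x)*id2

lemma hasDerivAt_binPoly (n M : ℕ) (hM : M ≤ n) (x : ℝ) :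
    HasDerivAt (fun x => binPoly n M x) (binPolyD n M x) x := by
  have h : HasDerivAt (fun x => binPoly n M x)
      (∑ k ∈ Finset.range M, (binPolyD n (k + 1) x - binPolyD n k x)) x := by
    simp only [binPoly]
    exact HasDerivAt.fun_sum fun k hk =>
      hasDerivAt_binTerm n k (lt_of_lt_of_le (Finset.mem_range.mp hk) hM) x
  rw [Finset.sum_range_sub (fun i => binPolyD n i x)] at h
  simpa [binPolyD] using h

lemma binPoly_anti (n M : ℕ) (hM : M ≤ n) : AntitoneOn (binPoly n M) (Set.Icc 0 1) := by
  apply antitoneOn_of_deriv_nonpos (convex_Icc 0 1)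
  · exact Continuous.continuousOn (by
      have : Differentiable ℝ (binPoly n M) := fun x => (hasDerivAt_binPoly n M hM x).differentiableAt
      exact this.continuous)
  · intro x _
    exact (hasDerivAt_binPoly n M hM x).differentiableAt.differentiableWithinAt
  · intro x hx
    rw [interior_Icc] at hx
    rw [(hasDerivAt_binPoly n M hM x).deriv]
    unfold binPolyD
    split
    · exact le_refl 0
    · exact neg_nonpos.mpr (mul_nonneg (mul_nonneg (mul_nonneg (Nat.cast_nonneg n)
        (Nat.cast_nonneg _)) (pow_nonneg hx.1.le _)) (pow_nonneg (by linarith [hx.2]) _))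

lemma binPoly_pascal (n M : ℕ) (hM : M ≤ n) (x : ℝ) :
    binPoly (n + 1) M x = (1 - x) * binPoly n M x + x * binPoly n (M - 1) x := by
  rcases Nat.eq_zero_or_pos M with h0 | h1
  · subst h0; simp [binPoly]
  · obtain ⟨M', rfl⟩ : ∃ M', M = M' + 1 := ⟨M - 1, by omega⟩
    simp only [binPoly, Nat.add_sub_cancel]
    rw [Finset.sum_range_succ' _ M', Finset.sum_range_succ' (fun k => ((n.choose k : ℕ) : ℝ) * x ^ k * (1 - x) ^ (n - k)) M']
    have hterm : ∀ k ∈ Finset.range M',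
        (((n+1).choose (k+1) : ℕ) : ℝ) * x^(k+1) * (1-x)^(n+1-(k+1)) =
        (1-x) * (((n.choose (k+1) : ℕ) : ℝ) * x^(k+1) * (1-x)^(n-(k+1)))
          + x * (((n.choose k : ℕ) : ℝ) * x^k * (1-x)^(n-k)) := by
      intro k hk
      have hkn : k + 1 ≤ n := by
        have := Finset.mem_range.mp hk; omega
      have hc : (n+1).choose (k+1) = n.choose k + n.choose (k+1) := Nat.choose_succ_succ n k
      have e1 : n + 1 - (k+1) = (n - (k+1)) + 1 := by omega
      have e2 : n - k = (n - (k+1)) + 1 := by omega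
      rw [hc, e1, e2]
      push_cast
      ring
    rw [Finset.sum_congr rfl hterm, Finset.sum_add_distrib, ← Finset.mul_sum, ← Finset.mul_sum]
    simp only [Nat.choose_zero_right, Nat.cast_one, one_mul, pow_zero, Nat.sub_zero]
    rw [pow_succ]
    ring

lemma binPoly_step (n T : ℕ) (lam : ℝ) (hT : (T : ℝ) + 1 ≤ lam) (hn : lam ≤ (n : ℝ)) :
    binPoly n (T + 1) (lam / n) ≤ binPoly (n + 1) (T + 1) (lam / (n + 1)) := by
  have hl1 : (1 : ℝ) ≤ lam := by
    have : (0:ℝ) ≤ T := Nat.cast_nonneg T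
    linarith
  have hn1 : (1 : ℝ) ≤ (n : ℝ) := le_trans hl1 hn
  have hnn : 1 ≤ n := by exact_mod_cast hn1
  have hn0 : (n : ℝ) ≠ 0 := by positivity
  have hTn : T + 1 ≤ n := by
    have : ((T : ℝ) + 1) ≤ (n : ℝ) := le_trans hT hn
    exact_mod_cast this
  set c : ℝ := lam / (n + 1) with hc
  have hc0 : 0 < c := by positivity
  set φ : ℝ → ℝ := fun y =>
    (1 - y) * binPoly n (T + 1) ((lam - y) / n) + y * binPoly n T ((lam - y) / n) with hφdef
  have hx' : ∀ y : ℝ, HasDerivAt (fun y => (lam - y) / (n : ℝ)) (-(1 / n)) y := by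
    intro y
    have h := ((hasDerivAt_id y).const_sub lam).div_const (n : ℝ)
    refine h.congr_deriv ?_
    ring
  have hD : ∀ y : ℝ, HasDerivAt φ
      ((0 - 1) * binPoly n (T + 1) ((lam - y) / n)
        + (1 - y) * (binPolyD n (T + 1) ((lam - y) / n) * (-(1 / n)))
        + (1 * binPoly n T ((lam - y) / n)
        + y * (binPolyD n T ((lam - y) / n) * (-(1 / n))))) y := by
    intro y
    have h1 : HasDerivAt (fun y => binPoly n (T + 1) ((lam - y) / n))
        (binPolyD n (T + 1) ((lam - y) / n) * (-(1 / n))) y :=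
      (hasDerivAt_binPoly n (T + 1) hTn _).comp y (hx' y)
    have h2 : HasDerivAt (fun y => binPoly n T ((lam - y) / n))
        (binPolyD n T ((lam - y) / n) * (-(1 / n))) y :=
      (hasDerivAt_binPoly n T (by omega) _).comp y (hx' y)
    exact (((hasDerivAt_const y (1:ℝ)).sub (hasDerivAt_id y)).mul h1).add
      ((hasDerivAt_id y).mul h2)
  have hmono : MonotoneOn φ (Set.Icc 0 c) := by
    apply monotoneOn_of_deriv_nonneg (convex_Icc 0 c)
    · exact (Continuous.continuousOn (by
        have : Differentiable ℝ φ := fun y => (hD y).differentiableAt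
        exact this.continuous))
    · intro y _; exact (hD y).differentiableAt.differentiableWithinAt
    · intro y hy
      rw [interior_Icc] at hy
      obtain ⟨hy0, hyc⟩ := hy
      rw [(hD y).deriv]
      set x : ℝ := (lam - y) / n with hxdef
      have hyc' : y * ((n : ℝ) + 1) < lam := by
        have := (lt_div_iff₀ (by positivity : (0:ℝ) < (n:ℝ) + 1)).mp hyc
        linarith
      have hxy : y ≤ x := by
        rw [hxdef, le_div_iff₀ (by positivity)]
        nlinarith
      have hx0 : 0 < x := lt_of_lt_of_le hy0 hxy
      have hx1 : x ≤ 1 := by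
        rw [hxdef, div_le_one (by positivity)]
        linarith
      have h1x : 0 ≤ 1 - x := by linarith
      have hnx : (T : ℝ) ≤ (n : ℝ) * x := by
        have h1 : (n : ℝ) * x = lam - y := by rw [hxdef]; field_simp
        have hTn' : (T : ℝ) ≤ (n : ℝ) := by
          have : ((T:ℝ) + 1) ≤ (n:ℝ) := le_trans hT hn
          linarith
        -- T*(n+1) ≤ lam*n  and  y*(n+1) < lam  give  T ≤ lam - y
        have h2 : (T : ℝ) * ((n:ℝ) + 1) ≤ lam * n := by nlinarith
        rw [h1]
        nlinarith
      -- now show nonnegativity of the derivative expression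
      obtain ⟨T'', rfl⟩ | hT0 : (∃ T'', T = T'' + 1) ∨ T = 0 := by
        rcases Nat.eq_zero_or_pos T with h | h
        · exact Or.inr h
        · exact Or.inl ⟨T - 1, by omega⟩
      · -- case T = T'' + 1
        set A : ℝ := (((n - 1).choose (T'' + 1) : ℕ) : ℝ) with hA
        set B : ℝ := (((n - 1).choose T'' : ℕ) : ℝ) with hB
        have hS : binPoly n (T'' + 1 + 1) x
            = binPoly n (T'' + 1) x + ((n.choose (T'' + 1) : ℕ) : ℝ) * x ^ (T'' + 1) * (1 - x) ^ (n - (T'' + 1)) := by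
          simp [binPoly, Finset.sum_range_succ]
        have hd1 : binPolyD n (T'' + 1 + 1) x = -((n : ℝ) * A * x ^ (T'' + 1) * (1 - x) ^ (n - (T'' + 2))) := by
          simp [binPolyD, hA]
        have hd2 : binPolyD n (T'' + 1) x = -((n : ℝ) * B * x ^ T'' * (1 - x) ^ (n - (T'' + 1))) := by
          simp [binPolyD, hB]
        have hPas : ((n.choose (T'' + 1) : ℕ) : ℝ) = B + A := by
          have h := Nat.choose_succ_succ (n - 1) T''
          simp only [Nat.succ_eq_add_one] at h
          rw [show n - 1 + 1 = n by omega] at h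
          rw [hA, hB]
          exact_mod_cast h
        have epow2 : (1 - x) ^ (n - (T'' + 1)) = (1 - x) ^ (n - (T'' + 2)) * (1 - x) := by
          rw [← pow_succ]; congr 1; omega
        have idAB : A * ((T'' : ℝ) + 1) = B * ((n : ℝ) - ((T'' : ℝ) + 1)) := by
          have h := Nat.choose_succ_right_eq (n - 1) T''
          rw [show n - 1 - T'' = n - (T'' + 1) by omega] at h
          have h' : A * (((T'' + 1 : ℕ) : ℕ) : ℝ) = B * (((n - (T'' + 1) : ℕ) : ℕ) : ℝ) := by
            rw [hA, hB]
            exact_mod_cast h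
          rw [Nat.cast_sub (by omega : T'' + 1 ≤ n)] at h'
          push_cast at h' ⊢
          linarith
        have hnT : (0 : ℝ) < (n : ℝ) - ((T'' : ℝ) + 1) := by
          have : ((T'' + 1 + 1 : ℕ) : ℝ) ≤ (n : ℝ) := by exact_mod_cast hTn
          push_cast at this
          linarith
        have hnx' : ((T'' : ℝ) + 1) ≤ (n : ℝ) * x := by
          have := hnx; push_cast at this; linarith
        have hABx : 0 ≤ A * x - B * (1 - x) := by
          have hkey : ((n : ℝ) - ((T'' : ℝ) + 1)) * (A * x - B * (1 - x))
              = A * ((n : ℝ) * x - ((T'' : ℝ) + 1)) := by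
            linear_combination (1 - x) * idAB
          have hA0 : 0 ≤ A := Nat.cast_nonneg _
          by_contra hcon
          push_neg at hcon
          nlinarith [mul_pos hnT (neg_pos.mpr hcon), mul_nonneg hA0 (by linarith : (0:ℝ) ≤ (n:ℝ) * x - ((T'':ℝ)+1))]
        have hG : (0 - 1) * binPoly n (T'' + 1 + 1) x
            + (1 - y) * (binPolyD n (T'' + 1 + 1) x * (-(1 / n)))
            + (1 * binPoly n (T'' + 1) x + y * (binPolyD n (T'' + 1) x * (-(1 / n))))
            = x ^ T'' * (1 - x) ^ (n - (T'' + 2)) * ((x - y) * (A * x - B * (1 - x))) := by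
          rw [hS, hd1, hd2, hPas, epow2, pow_succ]
          field_simp
          ring
        rw [hG]
        exact mul_nonneg (mul_nonneg (pow_nonneg hx0.le _) (pow_nonneg h1x _))
          (mul_nonneg (by linarith) hABx)
      · -- case T = 0
        subst hT0
        have hd1 : binPolyD n (0 + 1) x = -((n : ℝ) * 1 * x ^ 0 * (1 - x) ^ (n - 1)) := by
          simp [binPolyD]
        have hd2 : binPolyD n 0 x = 0 := by simp [binPolyD]
        have hS : binPoly n (0 + 1) x = (1 - x) ^ n := by
          simp [binPoly]
        have hS0 : binPoly n 0 x = 0 := by simp [binPoly]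
        have hG : (0 - 1) * binPoly n (0 + 1) x
            + (1 - y) * (binPolyD n (0 + 1) x * (-(1 / n)))
            + (1 * binPoly n 0 x + y * (binPolyD n 0 x * (-(1 / n))))
            = (1 - x) ^ (n - 1) * (x - y) := by
          have epn : (1 - x) ^ n = (1 - x) ^ (n - 1) * (1 - x) := by
            rw [← pow_succ]; congr 1; omega
          rw [hS, hd1, hd2, hS0, epn]
          field_simp
          ring
        rw [hG]
        exact mul_nonneg (pow_nonneg h1x _) (by linarith)
  -- conclude
  have hφ0 : φ 0 = binPoly n (T + 1) (lam / n) := by simp [hφdef]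
  have hlc : (lam - c) / n = c := by
    rw [hc]
    field_simp
    ring
  have hφc : φ c = binPoly (n + 1) (T + 1) c := by
    rw [hφdef]
    simp only [hlc]
    rw [binPoly_pascal n (T + 1) hTn c]
    simp only [Nat.add_sub_cancel]
  have := hmono (Set.mem_Icc.mpr ⟨le_refl 0, hc0.le⟩) (Set.mem_Icc.mpr ⟨hc0.le, le_refl c⟩) hc0.le
  rw [hφ0, hφc] at this
  exact this

lemma binPoly_chain (T : ℕ) (lam : ℝ) (hT : (T : ℝ) + 1 ≤ lam) (n m : ℕ)
    (hn : lam ≤ (n : ℝ)) (hnm : n ≤ m) :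
    binPoly n (T + 1) (lam / n) ≤ binPoly m (T + 1) (lam / m) := by
  induction m, hnm using Nat.le_induction with
  | base => exact le_refl _
  | succ m hm ih =>
      exact le_trans ih (by
        push_cast
        exact binPoly_step m T lam hT (le_trans hn (by exact_mod_cast hm)))

lemma binPoly_tendsto (T : ℕ) (lam : ℝ) (hlam : 0 < lam) :
    Filter.Tendsto (fun n : ℕ => binPoly n (T + 1) (lam / n)) Filter.atTop
      (nhds (Real.exp (-lam) * ∑ i ∈ Finset.range (T + 1), lam ^ i / (i.factorial : ℝ))) := by
  rw [Finset.mul_sum]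
  unfold binPoly
  apply tendsto_finset_sum
  intro i _
  have h1 : Filter.Tendsto (fun n : ℕ => ((n.choose i : ℕ) : ℝ) * (lam / n) ^ i)
      Filter.atTop (nhds (lam ^ i / (i.factorial : ℝ))) := by
    have hg : Filter.Tendsto
        (fun n : ℕ => lam ^ i / (i.factorial : ℝ) * ∏ j ∈ Finset.range i, (1 - (j : ℝ) / n))
        Filter.atTop (nhds (lam ^ i / (i.factorial : ℝ) * ∏ j ∈ Finset.range i, (1 : ℝ))) := by
      apply Filter.Tendsto.const_mul
      apply tendsto_finset_prod
      intro j _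
      simpa using tendsto_const_nhds.sub (tendsto_const_div_atTop_nhds_zero_nat (j : ℝ))
    simp only [Finset.prod_const_one, mul_one] at hg
    apply hg.congr'
    filter_upwards [Filter.eventually_ge_atTop (max i 1)] with n hn
    have hi : i ≤ n := le_trans (le_max_left _ _) hn
    have hn1 : 1 ≤ n := le_trans (le_max_right _ _) hn
    have hn0 : ((n : ℝ)) ≠ 0 := by positivity
    have hd : ((i.factorial : ℕ) : ℝ) * ((n.choose i : ℕ) : ℝ)
        = ∏ j ∈ Finset.range i, ((n : ℝ) - j) := by
      have h := Nat.descFactorial_eq_factorial_mul_choose n i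
      have h2 := Nat.descFactorial_eq_prod_range n i
      rw [h] at h2
      have : (((i.factorial * n.choose i : ℕ)) : ℝ) = ((∏ j ∈ Finset.range i, (n - j) : ℕ) : ℝ) := by
        exact_mod_cast congrArg (Nat.cast : ℕ → ℝ) h2
      rw [Nat.cast_prod] at this
      push_cast at this
      rw [this]
      apply Finset.prod_congr rfl
      intro j hj
      rw [Nat.cast_sub (le_trans (Nat.le_of_lt_succ (Nat.lt_succ_of_lt (Finset.mem_range.mp hj))) hi)]
    have hprod : ∏ j ∈ Finset.range i, (1 - (j : ℝ) / n)
        = (∏ j ∈ Finset.range i, ((n : ℝ) - j)) / (n : ℝ) ^ i := by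
      rw [eq_div_iff (by positivity),
        show ((n:ℝ)) ^ i = ∏ _j ∈ Finset.range i, (n:ℝ) by simp,
        ← Finset.prod_mul_distrib]
      refine Finset.prod_congr rfl fun j _ => by field_simp
    rw [hprod, div_pow]
    have hfac : ((i.factorial : ℕ) : ℝ) ≠ 0 := by positivity
    field_simp
    linear_combination -hd
  have h2 : Filter.Tendsto (fun n : ℕ => (1 - lam / n) ^ (n - i))
      Filter.atTop (nhds (Real.exp (-lam))) := by
    have hbase := Real.tendsto_one_add_div_pow_exp (-lam)
    have hb1 : Filter.Tendsto (fun n : ℕ => (1 + (-lam) / n)) Filter.atTop (nhds 1) := by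
      simpa using tendsto_const_nhds.add ((tendsto_const_div_atTop_nhds_zero_nat lam).neg.congr
        (fun n => by ring))
    have hpow : Filter.Tendsto (fun n : ℕ => (1 + (-lam) / n) ^ i) Filter.atTop (nhds 1) := by
      simpa using hb1.pow i
    have hq : Filter.Tendsto (fun n : ℕ => (1 + (-lam) / n) ^ n / (1 + (-lam) / n) ^ i)
        Filter.atTop (nhds (Real.exp (-lam))) := by
      have := hbase.div hpow one_ne_zero
      rw [div_one] at this
      exact this
    apply hq.congr'
    filter_upwards [Filter.eventually_ge_atTop (max i (⌊lam⌋₊ + 1))] with n hn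
    have hi : i ≤ n := le_trans (le_max_left _ _) hn
    have hlam_n : lam < (n : ℝ) := by
      have h1 : (⌊lam⌋₊ + 1 : ℕ) ≤ n := le_trans (le_max_right _ _) hn
      calc lam < ((⌊lam⌋₊ + 1 : ℕ) : ℝ) := by push_cast; exact Nat.lt_floor_add_one lam
        _ ≤ (n : ℝ) := by exact_mod_cast h1
    have hnpos : (0 : ℝ) < (n : ℝ) := lt_trans hlam hlam_n
    have hbne : (1 : ℝ) - lam / n ≠ 0 := by
      have : lam / n < 1 := (div_lt_one hnpos).mpr hlam_n
      linarith
    rw [show (1 : ℝ) + (-lam) / (n : ℝ) = 1 - lam / n by ring, div_eq_mul_inv, ← pow_sub₀ _ hbne hi]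
  rw [mul_comm]
  exact h1.mul h2

lemma binPoly_le_poisson (T n : ℕ) (lam : ℝ) (hT : (T : ℝ) + 1 ≤ lam) (hn : lam ≤ (n : ℝ)) :
    binPoly n (T + 1) (lam / n)
      ≤ Real.exp (-lam) * ∑ i ∈ Finset.range (T + 1), lam ^ i / (i.factorial : ℝ) := by
  have hlam : 0 < lam := lt_of_lt_of_le (by positivity) hT
  refine ge_of_tendsto (binPoly_tendsto T lam hlam) ?_
  filter_upwards [Filter.eventually_ge_atTop n] with m hm
  exact binPoly_chain T lam hT n m hn hm

/-- For `Z ~ Binomial(⌈M₂/(1-p)⌉, 1-p)` and an integer `T ≤ M₂ - 1`,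
`Pr[Z ≤ T] ≤ e^{-M₂} Σ_{i=0}^{T} M₂^i/i!`; moreover, for any `q ≥ p` such that
`M₂/(1-q)` is an integer `j`, `Pr[Z ≤ T] ≤ Σ_{i=0}^{T} C(j,i)(1-q)^i q^{j-i}`. -/
theorem binomial_lower_tail_le (p M2 : ℝ) (T : ℕ) (hp : 0 < p) (hp1 : p < 1)
    (hM2 : 0 ≤ M2) (hT : (T : ℝ) ≤ M2 - 1) :
    (∑ k ∈ Finset.range (T + 1),
        ((⌈M2 / (1 - p)⌉₊).choose k : ℝ) * (1 - p) ^ k * p ^ (⌈M2 / (1 - p)⌉₊ - k)) ≤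
      Real.exp (-M2) * ∑ i ∈ Finset.range (T + 1), M2 ^ i / (i.factorial : ℝ) ∧
    ∀ q : ℝ, p ≤ q → q < 1 → ∀ j : ℕ, (j : ℝ) = M2 / (1 - q) →
      (∑ k ∈ Finset.range (T + 1),
          ((⌈M2 / (1 - p)⌉₊).choose k : ℝ) * (1 - p) ^ k * p ^ (⌈M2 / (1 - p)⌉₊ - k)) ≤
        ∑ i ∈ Finset.range (T + 1), (j.choose i : ℝ) * (1 - q) ^ i * q ^ (j - i) := by
  have hp' : (0:ℝ) < 1 - p := by linarith
  have hT1 : (T : ℝ) + 1 ≤ M2 := by linarith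
  have hM1 : (1:ℝ) ≤ M2 := by
    have : (0:ℝ) ≤ (T : ℝ) := Nat.cast_nonneg T
    linarith
  set n := ⌈M2 / (1 - p)⌉₊ with hn
  have hceil : M2 / (1 - p) ≤ (n : ℝ) := Nat.le_ceil _
  have hM2div : M2 ≤ M2 / (1 - p) := by
    rw [le_div_iff₀ hp']
    nlinarith
  have hM2n : M2 ≤ (n : ℝ) := le_trans hM2div hceil
  have hnR : (0:ℝ) < (n : ℝ) := lt_of_lt_of_le (by linarith) hM2n
  have hx1 : M2 / n ≤ 1 - p := by
    rw [div_le_iff₀ hnR]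
    calc M2 = (M2 / (1 - p)) * (1 - p) := by field_simp
    _ ≤ (n : ℝ) * (1 - p) := by nlinarith
    _ = (1 - p) * n := mul_comm _ _
  have hx0 : (0:ℝ) ≤ M2 / n := by positivity
  have hTn : T + 1 ≤ n := by
    have : ((T + 1 : ℕ) : ℝ) ≤ (n : ℝ) := by push_cast; linarith
    exact_mod_cast this
  have hLHS : (∑ k ∈ Finset.range (T + 1), ((n).choose k : ℝ) * (1 - p) ^ k * p ^ (n - k))
      = binPoly n (T + 1) (1 - p) := by
    unfold binPoly
    refine Finset.sum_congr rfl fun k _ => ?_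
    rw [show (1:ℝ) - (1 - p) = p by ring]
  have hstep1 : binPoly n (T + 1) (1 - p) ≤ binPoly n (T + 1) (M2 / n) :=
    binPoly_anti n (T + 1) hTn (Set.mem_Icc.mpr ⟨hx0, le_trans hx1 (by linarith)⟩)
      (Set.mem_Icc.mpr ⟨by linarith, by linarith⟩) hx1
  constructor
  · rw [hLHS]
    exact le_trans hstep1 (binPoly_le_poisson T n M2 hT1 hM2n)
  · intro q hpq hq1 j hj
    have hq' : (0:ℝ) < 1 - q := by linarith
    have hjR : M2 / (1 - p) ≤ (j : ℝ) := by
      rw [hj, div_le_div_iff₀ hp' hq']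
      nlinarith
    have hnj : n ≤ j := by
      rw [hn]
      exact Nat.ceil_le.mpr hjR
    have hj0 : (0:ℝ) < (j : ℝ) := lt_of_lt_of_le hnR (by exact_mod_cast hnj)
    have hj' : (j : ℝ) * (1 - q) = M2 := by
      rw [hj]; field_simp
    have hMj : M2 / (j : ℝ) = 1 - q := by
      rw [div_eq_iff (ne_of_gt hj0)]
      linarith [hj']
    have hRHS : (∑ i ∈ Finset.range (T + 1), (j.choose i : ℝ) * (1 - q) ^ i * q ^ (j - i))
        = binPoly j (T + 1) (1 - q) := by
      unfold binPoly
      refine Finset.sum_congr rfl fun k _ => ?_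
      rw [show (1:ℝ) - (1 - q) = q by ring]
    rw [hLHS, hRHS, ← hMj]
    exact le_trans hstep1 (binPoly_chain T M2 hT1 n j hM2n hnj)
end
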